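/- arXiv:1008.3635 — 5 statements merged into one kernel-verified Lean document; each statement's English description precedes it below -/
import Mathlib

section
/- For a nonnegative integrable function w on a cube I ⊂ ℝᵈ, a > 0, and any subcube J ⊆ I, letting w_a = min(w, a), one has ⟨w_a⟩_J · ⟨w_a⁻¹⟩_J ≤ ⟨w⟩_J · ⟨w⁻¹⟩_J, where ⟨f⟩_J denotes the average (1/|J|)∫_J f. -/
open MeasureTheory Real

/-- A cube in `ℝᵈ` (a closed ball in the sup metric on `Fin d → ℝ`). -/
def IsCube {d : ℕ} (s : Set (Fin d → ℝ)) : Prop :=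
  ∃ c : Fin d → ℝ, ∃ r : ℝ, 0 < r ∧ s = Metric.closedBall c r

lemma cutoff_mixed_case {a u v : ℝ} (ha : 0 < a) (hu : 0 < u) (hv : 0 < v)
    (h1 : u ≤ a) (h2 : a ≤ v) : u * a⁻¹ + a * u⁻¹ ≤ u * v⁻¹ + v * u⁻¹ := by
  have key : (0:ℝ) ≤ (v - a) * (a * v - u * u) :=
    mul_nonneg (by linarith) (by nlinarith)
  have e1 : u * a⁻¹ + a * u⁻¹ = (u*u + a*a)/(a*u) := by field_simp
  have e2 : u * v⁻¹ + v * u⁻¹ = (u*u + v*v)/(v*u) := by field_simp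
  rw [e1, e2, div_le_div_iff₀ (by positivity) (by positivity)]
  nlinarith [key, mul_pos hu hv, mul_pos ha hv]

lemma cutoff_ptwise {a u v : ℝ} (ha : 0 < a) (hu : 0 ≤ u) (hv : 0 ≤ v) :
    min u a * (min v a)⁻¹ + min v a * (min u a)⁻¹ ≤ u * v⁻¹ + v * u⁻¹ := by
  rcases hu.eq_or_lt with h0 | hu
  · rw [← h0]; simp [min_eq_left ha.le]
  rcases hv.eq_or_lt with h0 | hv
  · rw [← h0]; simp [min_eq_left ha.le]
  rcases le_total u a with h1 | h1 <;> rcases le_total v a with h2 | h2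
  · rw [min_eq_left h1, min_eq_left h2]
  · rw [min_eq_left h1, min_eq_right h2]
    exact cutoff_mixed_case ha hu hv h1 h2
  · rw [min_eq_right h1, min_eq_left h2]
    have := cutoff_mixed_case ha hv hu h2 h1
    linarith
  · rw [min_eq_right h1, min_eq_right h2]
    have h : a * a⁻¹ + a * a⁻¹ = 2 := by field_simp; ring
    rw [h]
    have e2 : u * v⁻¹ + v * u⁻¹ = (u*u + v*v)/(v*u) := by field_simp
    rw [e2, le_div_iff₀ (by positivity)]
    nlinarith [sq_nonneg (u - v)]

theorem cutoff_A2_average {d : ℕ} (I J : Set (Fin d → ℝ))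
    (hI : IsCube I) (hJ : IsCube J) (hJI : J ⊆ I)
    (w : (Fin d → ℝ) → ℝ) (hw : Measurable w) (hw0 : ∀ x, 0 ≤ w x)
    (a : ℝ) (ha : 0 < a)
    (hint : IntegrableOn w J) (hint' : IntegrableOn (fun x => (w x)⁻¹) J) :
    (⨍ x in J, min (w x) a) * (⨍ x in J, (min (w x) a)⁻¹) ≤
      (⨍ x in J, w x) * (⨍ x in J, (w x)⁻¹) := by
  obtain ⟨c, r, hr, hJeq⟩ := hJ
  have hfin : volume J < ⊤ := hJeq ▸ measure_closedBall_lt_top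
  -- integrability of the truncated functions
  have hfmeas : Measurable fun x => min (w x) a := hw.min measurable_const
  have hf0 : ∀ x, 0 ≤ min (w x) a := fun x => le_min (hw0 x) ha.le
  have hfI : IntegrableOn (fun x => min (w x) a) J := by
    refine hint.mono' hfmeas.aestronglyMeasurable (ae_of_all _ fun x => ?_)
    rw [Real.norm_eq_abs, abs_of_nonneg (hf0 x)]
    exact min_le_left _ _
  have hgI : IntegrableOn (fun x => (min (w x) a)⁻¹) J := by
    have hhI : IntegrableOn (fun x => (w x)⁻¹ + a⁻¹) J :=
      hint'.add (integrableOn_const hfin.ne)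
    refine hhI.mono' hfmeas.inv.aestronglyMeasurable (ae_of_all _ fun x => ?_)
    rw [Real.norm_eq_abs, abs_of_nonneg (inv_nonneg.2 (hf0 x))]
    have hb : (min (w x) a)⁻¹ ≤ (w x)⁻¹ + a⁻¹ := by
      rcases le_total (w x) a with h | h
      · rw [min_eq_left h]; exact le_add_of_nonneg_right (inv_nonneg.2 ha.le)
      · rw [min_eq_right h]; exact le_add_of_nonneg_left (inv_nonneg.2 (hw0 x))
    exact hb
  -- the four product integrands are integrable on (volume.restrict J).prod (volume.restrict J)
  have hA : Integrable (fun z : ((Fin d → ℝ) × (Fin d → ℝ)) =>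
      min (w z.1) a * (min (w z.2) a)⁻¹) ((volume.restrict J).prod (volume.restrict J)) := hfI.mul_prod hgI
  have hB : Integrable (fun z : ((Fin d → ℝ) × (Fin d → ℝ)) =>
      min (w z.2) a * (min (w z.1) a)⁻¹) ((volume.restrict J).prod (volume.restrict J)) :=
    (hgI.mul_prod hfI).congr (ae_of_all _ fun z => mul_comm _ _)
  have hC : Integrable (fun z : ((Fin d → ℝ) × (Fin d → ℝ)) =>
      w z.1 * (w z.2)⁻¹) ((volume.restrict J).prod (volume.restrict J)) := hint.mul_prod hint'
  have hD : Integrable (fun z : ((Fin d → ℝ) × (Fin d → ℝ)) =>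
      w z.2 * (w z.1)⁻¹) ((volume.restrict J).prod (volume.restrict J)) :=
    (hint'.mul_prod hint).congr (ae_of_all _ fun z => mul_comm _ _)
  -- the key inequality between products of integrals
  have key : (∫ x in J, min (w x) a) * (∫ x in J, (min (w x) a)⁻¹) ≤
      (∫ x in J, w x) * (∫ x in J, (w x)⁻¹) := by
    have hmono : (∫ z, (min (w z.1) a * (min (w z.2) a)⁻¹ +
        min (w z.2) a * (min (w z.1) a)⁻¹) ∂((volume.restrict J).prod (volume.restrict J))) ≤
        ∫ z, (w z.1 * (w z.2)⁻¹ + w z.2 * (w z.1)⁻¹) ∂((volume.restrict J).prod (volume.restrict J)) := by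
      refine integral_mono (hA.add hB) (hC.add hD) fun z => ?_
      exact cutoff_ptwise ha (hw0 z.1) (hw0 z.2)
    rw [integral_add hA hB, integral_add hC hD] at hmono
    have eB : (∫ z, min (w z.2) a * (min (w z.1) a)⁻¹ ∂((volume.restrict J).prod (volume.restrict J))) =
        (∫ x in J, (min (w x) a)⁻¹) * (∫ x in J, min (w x) a) := by
      rw [show (fun z : ((Fin d → ℝ) × (Fin d → ℝ)) =>
          min (w z.2) a * (min (w z.1) a)⁻¹) =
          (fun z => (min (w z.1) a)⁻¹ * min (w z.2) a) from
        funext fun z => mul_comm _ _]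
      exact integral_prod_mul (fun x => (min (w x) a)⁻¹) (fun x => min (w x) a)
    have eD : (∫ z, w z.2 * (w z.1)⁻¹ ∂((volume.restrict J).prod (volume.restrict J))) =
        (∫ x in J, (w x)⁻¹) * (∫ x in J, w x) := by
      rw [show (fun z : ((Fin d → ℝ) × (Fin d → ℝ)) => w z.2 * (w z.1)⁻¹) =
          (fun z => (w z.1)⁻¹ * w z.2) from funext fun z => mul_comm _ _]
      exact integral_prod_mul (fun x => (w x)⁻¹) w
    rw [integral_prod_mul (fun x => min (w x) a) (fun x => (min (w x) a)⁻¹),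
      integral_prod_mul w (fun x => (w x)⁻¹), eB, eD] at hmono
    linarith
  -- pass from integrals to averages
  rw [setAverage_eq, setAverage_eq, setAverage_eq, setAverage_eq]
  simp only [smul_eq_mul]
  set V := (volume J).toReal⁻¹ with hV
  have hVnn : 0 ≤ V := inv_nonneg.2 ENNReal.toReal_nonneg
  calc V * (∫ x in J, min (w x) a) * (V * ∫ x in J, (min (w x) a)⁻¹)
      = V * V * ((∫ x in J, min (w x) a) * ∫ x in J, (min (w x) a)⁻¹) := by ring
    _ ≤ V * V * ((∫ x in J, w x) * ∫ x in J, (w x)⁻¹) :=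
        mul_le_mul_of_nonneg_left key (mul_nonneg hVnn hVnn)
    _ = V * (∫ x in J, w x) * (V * ∫ x in J, (w x)⁻¹) := by ring
end

section
/- Let p₁ > p₂ be nonzero reals, w nonnegative on a cube I, a > 0, and w_a = min(w, a). Then for every subcube J ⊆ I, ⟨w_a^{p₁}⟩_J^{1/p₁} · ⟨w_a^{p₂}⟩_J^{-1/p₂} ≤ ⟨w^{p₁}⟩_J^{1/p₁} · ⟨w^{p₂}⟩_J^{-1/p₂}. -/
open MeasureTheory Real Set Filter Topology

section Auxiliary

variable {α : Type*} [MeasurableSpace α] {μ : Measure α} [IsFiniteMeasure μ]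
  {w : α → ℝ} {p t a : ℝ}

-- monotonicity from right derivative
lemma le_of_right_deriv {L D : ℝ → ℝ} {a b : ℝ} (hab : a ≤ b)
    (hL : ContinuousOn L (Icc a b))
    (hD : ∀ x ∈ Ico a b, HasDerivWithinAt L (D x) (Ici x) x)
    (hD0 : ∀ x ∈ Ico a b, 0 ≤ D x) : L a ≤ L b := by
  have := image_le_of_liminf_slope_right_le_deriv_boundary
    (f := fun _ => L a) (B := L) (B' := D) continuousOn_const le_rfl hL hD
    (fun x hx r hr => by
      have : (0:ℝ) < r := lt_of_le_of_lt (hD0 x hx) hr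
      refine Eventually.frequently ?_
      filter_upwards with z
      simp [slope_def_field, this])
  exact this (right_mem_Icc.2 hab)

-- pointwise bound for integrability
-- pointwise bound for the limit T → ∞
lemma pw_bound' {v t a p : ℝ} (hv : 0 ≤ v) (ha : 0 < a) (hat : a ≤ t) (hp : p ≠ 0) :
    min v t ^ p ≤ a ^ p + v ^ p := by
  rcases min_cases v t with ⟨h, _⟩ | ⟨h, hle⟩
  · rw [h]; nlinarith [rpow_nonneg ha.le p]
  · rw [h]
    rcases lt_or_ge 0 p with hp' | hp'
    · have : t ^ p ≤ v ^ p := rpow_le_rpow (le_trans ha.le hat) hle.le hp'.le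
      nlinarith [rpow_nonneg ha.le p]
    · have : t ^ p ≤ a ^ p := rpow_le_rpow_of_nonpos ha hat hp'
      nlinarith [rpow_nonneg hv p]

-- key pointwise inequality
lemma pw_key {v t p₁ p₂ : ℝ} (hv : 0 ≤ v) (ht : 0 < t) (hvt : v ≤ t)
    (hp₁ : p₁ ≠ 0) (hp₂ : p₂ ≠ 0) (hp : p₂ ≤ p₁) :
    t ^ p₂ * v ^ p₁ ≤ t ^ p₁ * v ^ p₂ := by
  rcases eq_or_lt_of_le hv with h0 | h0
  · rw [← h0, zero_rpow hp₁, zero_rpow hp₂, mul_zero, mul_zero]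
  · have hu1 : v / t ≤ 1 := div_le_one_of_le₀ hvt ht.le
    have hu0 : 0 < v / t := div_pos h0 ht
    have := rpow_le_rpow_of_exponent_ge hu0 hu1 hp
    rw [div_rpow hv ht.le, div_rpow hv ht.le] at this
    rw [div_le_div_iff₀ (rpow_pos_of_pos ht _) (rpow_pos_of_pos ht _)] at this
    linarith [this]

lemma meas_min (hw : Measurable w) (t p : ℝ) :
    Measurable (fun x => min (w x) t ^ p) :=
  (measurable_id'.pow_const p).comp (hw.min measurable_const)

lemma pw_bound0 {v t p : ℝ} (hv : 0 ≤ v) (ht : 0 ≤ t) : min v t ^ p ≤ t ^ p + v ^ p := by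
  rcases min_cases v t with ⟨h, _⟩ | ⟨h, _⟩
  · rw [h]; nlinarith [rpow_nonneg ht p]
  · rw [h]; nlinarith [rpow_nonneg hv p]

lemma int_min (hw : Measurable w) (hw0 : ∀ x, 0 ≤ w x) (ht : 0 ≤ t)
    (hint : Integrable (fun x => w x ^ p) μ) :
    Integrable (fun x => min (w x) t ^ p) μ := by
  refine Integrable.mono' ((integrable_const (t ^ p)).add hint)
    (meas_min hw t p).aestronglyMeasurable ?_
  filter_upwards with x
  rw [Real.norm_of_nonneg (rpow_nonneg (le_min (hw0 x) ht) p)]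
  exact pw_bound0 (hw0 x) ht

lemma pos_min (hw : Measurable w) (hw0 : ∀ x, 0 ≤ w x) (ht : 0 < t)
    (hint : Integrable (fun x => w x ^ p) μ) (hz : 0 < μ {x | 0 < w x}) :
    0 < ∫ x, min (w x) t ^ p ∂μ := by
  rw [integral_pos_iff_support_of_nonneg
    (fun x => rpow_nonneg (le_min (hw0 x) ht.le) p) (int_min hw hw0 ht.le hint)]
  refine lt_of_lt_of_le hz (measure_mono ?_)
  intro x hx
  exact ne_of_gt (rpow_pos_of_pos (lt_min hx ht) p)

lemma pos_plain (hw0 : ∀ x, 0 ≤ w x)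
    (hint : Integrable (fun x => w x ^ p) μ) (hz : 0 < μ {x | 0 < w x}) :
    0 < ∫ x, w x ^ p ∂μ := by
  rw [integral_pos_iff_support_of_nonneg (fun x => rpow_nonneg (hw0 x) p) hint]
  refine lt_of_lt_of_le hz (measure_mono ?_)
  intro x hx
  exact ne_of_gt (rpow_pos_of_pos hx p)

lemma hasDeriv_S (hw : Measurable w) (hw0 : ∀ x, 0 ≤ w x) (ht : 0 < t)
    (hint : Integrable (fun x => w x ^ p) μ) :
    HasDerivWithinAt (fun s => ∫ x, min (w x) s ^ p ∂μ)
      (p * t ^ (p - 1) * (μ {x | t < w x}).toReal) (Ici t) t := by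
  have hC0 : (0:ℝ) ≤ |p| * (t ^ (p-1) + (t+1) ^ (p-1)) := by
    have h1 : (0:ℝ) ≤ t ^ (p-1) := (rpow_pos_of_pos ht _).le
    have h2 : (0:ℝ) ≤ (t+1) ^ (p-1) := (rpow_pos_of_pos (by linarith) _).le
    positivity
  set C : ℝ := |p| * (t ^ (p-1) + (t+1) ^ (p-1)) with hC
  set g : α → ℝ := indicator {x | t < w x} (fun _ => p * t ^ (p-1)) with hg
  have hmeasS : MeasurableSet {x | t < w x} := measurableSet_lt measurable_const hw
  have hintg : ∫ x, g x ∂μ = p * t ^ (p - 1) * (μ {x | t < w x}).toReal := by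
    rw [hg, integral_indicator hmeasS, setIntegral_const, smul_eq_mul, mul_comm]
    rfl
  rw [hasDerivWithinAt_iff_tendsto_slope, Ici_sdiff_left, ← hintg]
  set Q : ℝ → α → ℝ := fun z x => (min (w x) z ^ p - min (w x) t ^ p) / (z - t) with hQ
  have key : Tendsto (fun z => ∫ x, Q z x ∂μ) (𝓝[>] t) (𝓝 (∫ x, g x ∂μ)) := by
    apply tendsto_integral_filter_of_dominated_convergence (fun _ => C)
    · filter_upwards with z
      exact (((meas_min hw z p).sub (meas_min hw t p)).div_const _).aestronglyMeasurable
    · filter_upwards [Ioc_mem_nhdsGT_of_mem (left_mem_Ico.2 (lt_add_one t))] with z hz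
      filter_upwards with x
      rcases le_or_gt (w x) t with hx | hx
      · have e1 : min (w x) z = w x := min_eq_left (hx.trans hz.1.le)
        have e2 : min (w x) t = w x := min_eq_left hx
        simp [hQ, e1, e2, hC0]
      · have e2 : min (w x) t = t := min_eq_right hx.le
        set m := min (w x) z with hm
        have hmem : m ∈ Icc t (t+1) :=
          ⟨le_min hx.le hz.1.le, min_le_right _ _ |>.trans hz.2⟩
        have htm : t ∈ Icc t (t+1) := ⟨le_rfl, by linarith⟩
        have hlip : ‖(m:ℝ) ^ p - t ^ p‖ ≤ C * ‖m - t‖ := by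
          apply Convex.norm_image_sub_le_of_norm_hasDerivWithin_le
            (f := fun y : ℝ => y ^ p) (f' := fun y : ℝ => p * y ^ (p-1))
            (s := Icc t (t+1)) ?_ ?_ (convex_Icc _ _) htm hmem
          · intro y hy
            exact (hasDerivAt_rpow_const
              (Or.inl (ne_of_gt (lt_of_lt_of_le ht hy.1)))).hasDerivWithinAt
          · intro y hy
            have hy0 : 0 < y := lt_of_lt_of_le ht hy.1
            rw [norm_mul, Real.norm_eq_abs, Real.norm_eq_abs,
              abs_of_nonneg (rpow_pos_of_pos hy0 _).le]
            rcases le_or_gt 0 (p - 1) with hs | hs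
            · have : y ^ (p-1) ≤ (t+1) ^ (p-1) := rpow_le_rpow hy0.le hy.2 hs
              have h1 : (0:ℝ) ≤ t ^ (p-1) := (rpow_pos_of_pos ht _).le
              rw [hC]; nlinarith [abs_nonneg p]
            · have : y ^ (p-1) ≤ t ^ (p-1) := rpow_le_rpow_of_nonpos ht hy.1 hs.le
              have h2 : (0:ℝ) ≤ (t+1) ^ (p-1) := (rpow_pos_of_pos (by linarith) _).le
              rw [hC]; nlinarith [abs_nonneg p]
        have hzt : 0 < z - t := sub_pos.2 hz.1
        have hmz : m - t ≤ z - t := by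
          have : m ≤ z := min_le_right _ _
          linarith
        have hmt : 0 ≤ m - t := sub_nonneg.2 hmem.1
        rw [hQ]
        simp only [e2]
        rw [norm_div, Real.norm_eq_abs (z - t), abs_of_pos hzt, div_le_iff₀ hzt]
        calc ‖m ^ p - t ^ p‖ ≤ C * ‖m - t‖ := hlip
          _ = C * (m - t) := by rw [Real.norm_eq_abs, abs_of_nonneg hmt]
          _ ≤ C * (z - t) := by nlinarith
    · exact integrable_const C
    · filter_upwards with x
      rcases le_or_gt (w x) t with hx | hx
      · have hgx : g x = 0 := by
          simp [hg, indicator_apply, not_lt.2 hx]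
        rw [hgx]
        apply Tendsto.congr' ?_ tendsto_const_nhds
        filter_upwards [self_mem_nhdsWithin] with z (hz : t < z)
        have e1 : min (w x) z = w x := min_eq_left (hx.trans hz.le)
        have e2 : min (w x) t = w x := min_eq_left hx
        simp [hQ, e1, e2]
      · have hgx : g x = p * t ^ (p-1) := by simp [hg, indicator_apply, hx]
        rw [hgx]
        have hder : Tendsto (slope (fun y : ℝ => y ^ p) t) (𝓝[≠] t)
            (𝓝 (p * t ^ (p-1))) :=
          hasDerivAt_iff_tendsto_slope.1 (hasDerivAt_rpow_const (Or.inl ht.ne'))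
        have hmono : 𝓝[>] t ≤ 𝓝[≠] t :=
          nhdsWithin_mono _ (fun z hz => ne_of_gt hz)
        apply Tendsto.congr' ?_ (hder.mono_left hmono)
        filter_upwards [Ioo_mem_nhdsGT_of_mem (left_mem_Ico.2 hx)] with z hz
        have e1 : min (w x) z = z := min_eq_right hz.2.le
        have e2 : min (w x) t = t := min_eq_right hx.le
        simp only [hQ, slope_def_field, e1, e2]
  apply key.congr'
  filter_upwards [self_mem_nhdsWithin] with z (hz : t < z)
  have hz0 : (0:ℝ) ≤ z := (ht.trans hz).le
  rw [slope_def_field, hQ]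
  rw [← integral_sub (int_min hw hw0 hz0 hint) (int_min hw hw0 ht.le hint)]
  rw [integral_div]

lemma cont_S (hw : Measurable w) (hw0 : ∀ x, 0 ≤ w x) (ht : 0 < t)
    (hint : Integrable (fun x => w x ^ p) μ) :
    ContinuousAt (fun s => ∫ x, min (w x) s ^ p ∂μ) t := by
  apply continuousAt_of_dominated (bound := fun x => (t/2) ^ p + (t+1) ^ p + w x ^ p)
  · filter_upwards with z
    exact (meas_min hw z p).aestronglyMeasurable
  · filter_upwards [Ioo_mem_nhds (by linarith : t/2 < t) (lt_add_one t)] with z hz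
    filter_upwards with x
    have hz0 : (0:ℝ) < z := lt_trans (by linarith) hz.1
    rw [Real.norm_of_nonneg (rpow_nonneg (le_min (hw0 x) hz0.le) p)]
    have h1 : min (w x) z ^ p ≤ z ^ p + w x ^ p := pw_bound0 (hw0 x) hz0.le
    have h2 : z ^ p ≤ (t/2) ^ p + (t+1) ^ p := by
      rcases le_or_gt 0 p with hs | hs
      · have := rpow_le_rpow hz0.le hz.2.le hs
        nlinarith [rpow_pos_of_pos (by linarith : (0:ℝ) < t/2) p]
      · have := rpow_le_rpow_of_nonpos (by linarith : (0:ℝ) < t/2) hz.1.le hs.le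
        nlinarith [rpow_pos_of_pos (by linarith : (0:ℝ) < t+1) p]
    linarith
  · exact ((integrable_const _).add hint)
  · filter_upwards with x
    rcases eq_or_lt_of_le (hw0 x) with h0 | h0
    · have : ∀ᶠ z in 𝓝 t, min (w x) z ^ p = (0:ℝ) ^ p := by
        filter_upwards [Ioo_mem_nhds (by linarith : t/2 < t) (lt_add_one t)] with z hz
        rw [min_eq_left (by linarith [hz.1, h0.le] : w x ≤ z), ← h0]
      exact continuousAt_const.congr (by filter_upwards [this] with z hz; rw [hz])
    · apply ContinuousAt.rpow_const
      · exact (continuous_const.min continuous_id).continuousAt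
      · left; exact ne_of_gt (lt_min h0 ht)

lemma lim_S (hw : Measurable w) (hw0 : ∀ x, 0 ≤ w x) (ha : 0 < a) (hp : p ≠ 0)
    (hint : Integrable (fun x => w x ^ p) μ) :
    Tendsto (fun T => ∫ x, min (w x) T ^ p ∂μ) atTop (𝓝 (∫ x, w x ^ p ∂μ)) := by
  apply tendsto_integral_filter_of_dominated_convergence (fun x => a ^ p + w x ^ p)
  · filter_upwards with T
    exact (meas_min hw T p).aestronglyMeasurable
  · filter_upwards [eventually_ge_atTop a] with T hT
    filter_upwards with x
    rw [Real.norm_of_nonneg (rpow_nonneg (le_min (hw0 x) (ha.trans_le hT).le) p)]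
    exact pw_bound' (hw0 x) ha hT hp
  · exact ((integrable_const _).add hint)
  · filter_upwards with x
    apply Tendsto.congr' ?_ tendsto_const_nhds
    filter_upwards [eventually_ge_atTop (w x)] with T hT
    rw [min_eq_left hT]

theorem main_integral {α : Type*} [MeasurableSpace α] (μ : Measure α) [IsFiniteMeasure μ]
    (p₁ p₂ : ℝ) (hp₁ : p₁ ≠ 0) (hp₂ : p₂ ≠ 0) (hp : p₂ < p₁)
    (w : α → ℝ) (hw : Measurable w) (hw0 : ∀ x, 0 ≤ w x)
    (a : ℝ) (ha : 0 < a)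
    (hint₁ : Integrable (fun x => w x ^ p₁) μ)
    (hint₂ : Integrable (fun x => w x ^ p₂) μ) :
    (∫ x, min (w x) a ^ p₁ ∂μ) ^ (1 / p₁) * (∫ x, min (w x) a ^ p₂ ∂μ) ^ (-(1 / p₂)) ≤
      (∫ x, w x ^ p₁ ∂μ) ^ (1 / p₁) * (∫ x, w x ^ p₂ ∂μ) ^ (-(1 / p₂)) := by
  by_cases hz : μ {x | 0 < w x} = 0
  · -- degenerate case : w = 0 a.e.
    have h0 : (∫ x, min (w x) a ^ p₁ ∂μ) = 0 := by
      rw [← integral_zero α ℝ (μ := μ)]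
      apply integral_congr_ae
      have : ∀ᵐ x ∂μ, w x = 0 := by
        rw [ae_iff]
        convert hz using 2
        ext x
        simp only [mem_setOf_eq]
        constructor
        · intro h; exact lt_of_le_of_ne (hw0 x) (Ne.symm h)
        · intro h; exact ne_of_gt h
      filter_upwards [this] with x hx
      rw [hx, min_eq_left ha.le, zero_rpow hp₁]
    rw [h0, zero_rpow (by simpa using hp₁ : 1/p₁ ≠ 0), zero_mul]
    exact mul_nonneg (rpow_nonneg (integral_nonneg fun x => rpow_nonneg (hw0 x) _) _)
      (rpow_nonneg (integral_nonneg fun x => rpow_nonneg (hw0 x) _) _)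
  · have hz' : 0 < μ {x | 0 < w x} := pos_iff_ne_zero.2 hz
    set S : ℝ → ℝ → ℝ := fun p s => ∫ x, min (w x) s ^ p ∂μ with hS
    set ν : ℝ → ℝ := fun s => (μ {x | s < w x}).toReal with hν
    set L : ℝ → ℝ := fun s => (1/p₁) * log (S p₁ s) - (1/p₂) * log (S p₂ s) with hL
    have hSpos : ∀ p, Integrable (fun x => w x ^ p) μ → ∀ s, 0 < s → 0 < S p s :=
      fun p hi s hs => pos_min hw hw0 hs hi hz'
    have hT₁ : 0 < ∫ x, w x ^ p₁ ∂μ := pos_plain hw0 hint₁ hz'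
    have hT₂ : 0 < ∫ x, w x ^ p₂ ∂μ := pos_plain hw0 hint₂ hz'
    -- monotonicity of L
    have hmono : ∀ b, a ≤ b → L a ≤ L b := by
      intro b hab
      set D : ℝ → ℝ := fun s =>
        (1/p₁) * ((S p₁ s)⁻¹ * (p₁ * s ^ (p₁ - 1) * ν s)) -
        (1/p₂) * ((S p₂ s)⁻¹ * (p₂ * s ^ (p₂ - 1) * ν s)) with hD
      apply le_of_right_deriv (D := D) hab
      · intro s hs
        have hs0 : 0 < s := lt_of_lt_of_le ha hs.1
        exact ((continuousAt_const.mul ((Real.continuousAt_log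
            (hSpos _ hint₁ s hs0).ne').comp (cont_S hw hw0 hs0 hint₁))).sub
          (continuousAt_const.mul ((Real.continuousAt_log
            (hSpos _ hint₂ s hs0).ne').comp (cont_S hw hw0 hs0 hint₂)))).continuousWithinAt
      · intro s hs
        have hs0 : 0 < s := lt_of_lt_of_le ha hs.1
        have h1 : HasDerivWithinAt (fun u => log (S p₁ u))
            ((S p₁ s)⁻¹ * (p₁ * s ^ (p₁ - 1) * ν s)) (Ici s) s :=
          (Real.hasDerivAt_log (hSpos _ hint₁ s hs0).ne').comp_hasDerivWithinAt s
            (hasDeriv_S hw hw0 hs0 hint₁)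
        have h2 : HasDerivWithinAt (fun u => log (S p₂ u))
            ((S p₂ s)⁻¹ * (p₂ * s ^ (p₂ - 1) * ν s)) (Ici s) s :=
          (Real.hasDerivAt_log (hSpos _ hint₂ s hs0).ne').comp_hasDerivWithinAt s
            (hasDeriv_S hw hw0 hs0 hint₂)
        exact (h1.const_mul (1/p₁)).sub (h2.const_mul (1/p₂))
      · intro s hs
        have hs0 : 0 < s := lt_of_lt_of_le ha hs.1
        have s1pos : 0 < S p₁ s := hSpos _ hint₁ s hs0
        have s2pos : 0 < S p₂ s := hSpos _ hint₂ s hs0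
        have hν0 : 0 ≤ ν s := ENNReal.toReal_nonneg
        have key : s ^ p₂ * S p₁ s ≤ s ^ p₁ * S p₂ s := by
          have hpt := integral_mono
            ((int_min hw hw0 hs0.le hint₁).const_mul (s ^ p₂))
            ((int_min hw hw0 hs0.le hint₂).const_mul (s ^ p₁))
            (fun x => pw_key (le_min (hw0 x) hs0.le) hs0 (min_le_right _ _) hp₁ hp₂ hp.le)
          rwa [MeasureTheory.integral_const_mul, MeasureTheory.integral_const_mul] at hpt
        have e1 : (1/p₁) * ((S p₁ s)⁻¹ * (p₁ * s ^ (p₁ - 1) * ν s))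
            = s ^ (p₁ - 1) * ν s / S p₁ s := by
          field_simp
        have e2 : (1/p₂) * ((S p₂ s)⁻¹ * (p₂ * s ^ (p₂ - 1) * ν s))
            = s ^ (p₂ - 1) * ν s / S p₂ s := by
          field_simp
        have goal2 : s ^ (p₂ - 1) * ν s / S p₂ s ≤ s ^ (p₁ - 1) * ν s / S p₁ s := by
          rw [div_le_div_iff₀ s2pos s1pos, rpow_sub hs0, rpow_sub hs0, rpow_one]
          have h3 : ν s * (s ^ p₂ * S p₁ s) ≤ ν s * (s ^ p₁ * S p₂ s) :=
            mul_le_mul_of_nonneg_left key hν0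
          calc s ^ p₂ / s * ν s * S p₁ s = (1/s) * (ν s * (s ^ p₂ * S p₁ s)) := by ring
            _ ≤ (1/s) * (ν s * (s ^ p₁ * S p₂ s)) :=
              mul_le_mul_of_nonneg_left h3 (by positivity)
            _ = s ^ p₁ / s * ν s * S p₂ s := by ring
        rw [hD]
        simp only [e1, e2]
        linarith
    -- limit as the truncation level tends to infinity
    have hlim : Tendsto L atTop
        (𝓝 ((1/p₁) * log (∫ x, w x ^ p₁ ∂μ) - (1/p₂) * log (∫ x, w x ^ p₂ ∂μ))) := by
      apply Tendsto.sub
      · exact (tendsto_const_nhds.mul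
          (((Real.continuousAt_log hT₁.ne').tendsto).comp (lim_S hw hw0 ha hp₁ hint₁)))
      · exact (tendsto_const_nhds.mul
          (((Real.continuousAt_log hT₂.ne').tendsto).comp (lim_S hw hw0 ha hp₂ hint₂)))
    have final_log : L a ≤ (1/p₁) * log (∫ x, w x ^ p₁ ∂μ) - (1/p₂) * log (∫ x, w x ^ p₂ ∂μ) :=
      ge_of_tendsto hlim (eventually_atTop.2 ⟨a, fun b hb => hmono b hb⟩)
    have expand : ∀ X Y : ℝ, 0 < X → 0 < Y →
        X ^ (1/p₁) * Y ^ (-(1/p₂)) = exp ((1/p₁) * log X - (1/p₂) * log Y) := by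
      intro X Y hX hY
      rw [rpow_def_of_pos hX, rpow_def_of_pos hY, ← exp_add]
      ring_nf
    have lhs_eq : (∫ x, min (w x) a ^ p₁ ∂μ) ^ (1/p₁) * (∫ x, min (w x) a ^ p₂ ∂μ) ^ (-(1/p₂))
        = exp (L a) := by
      rw [expand _ _ (hSpos _ hint₁ a ha) (hSpos _ hint₂ a ha)]
    have rhs_eq : (∫ x, w x ^ p₁ ∂μ) ^ (1/p₁) * (∫ x, w x ^ p₂ ∂μ) ^ (-(1/p₂))
        = exp ((1/p₁) * log (∫ x, w x ^ p₁ ∂μ) - (1/p₂) * log (∫ x, w x ^ p₂ ∂μ)) :=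
      expand _ _ hT₁ hT₂
    rw [lhs_eq, rhs_eq]
    exact exp_le_exp.2 final_log

end Auxiliary

theorem cutoff_Ap1p2_average {d : ℕ} (I J : Set (Fin d → ℝ))
    (hI : IsCube I) (hJ : IsCube J) (hJI : J ⊆ I)
    (p₁ p₂ : ℝ) (hp₁ : p₁ ≠ 0) (hp₂ : p₂ ≠ 0) (hp : p₂ < p₁)
    (w : (Fin d → ℝ) → ℝ) (hw : Measurable w) (hw0 : ∀ x, 0 ≤ w x)
    (a : ℝ) (ha : 0 < a)
    (hint₁ : IntegrableOn (fun x => w x ^ p₁) J)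
    (hint₂ : IntegrableOn (fun x => w x ^ p₂) J) :
    (⨍ x in J, (min (w x) a) ^ p₁) ^ (1 / p₁) * (⨍ x in J, (min (w x) a) ^ p₂) ^ (-(1 / p₂)) ≤
      (⨍ x in J, w x ^ p₁) ^ (1 / p₁) * (⨍ x in J, w x ^ p₂) ^ (-(1 / p₂)) := by
  have hJfin : volume J ≠ ⊤ := by
    obtain ⟨c, r, hr, rfl⟩ := hJ
    exact (isCompact_closedBall c r).measure_lt_top.ne
  haveI : IsFiniteMeasure (volume.restrict J) :=
    ⟨by rw [Measure.restrict_apply_univ]; exact lt_top_iff_ne_top.2 hJfin⟩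
  set k : ℝ := ((volume : Measure (Fin d → ℝ)) J).toReal⁻¹ with hk
  have hk0 : 0 ≤ k := by positivity
  have havg : ∀ f : (Fin d → ℝ) → ℝ, (⨍ x in J, f x) = k * ∫ x in J, f x := by
    intro f
    rw [setAverage_eq, smul_eq_mul, hk]
    rfl
  have hnn : ∀ g : (Fin d → ℝ) → ℝ, (∀ x, 0 ≤ g x) → 0 ≤ ∫ x in J, g x :=
    fun g hg => integral_nonneg fun x => hg x
  have n1 : 0 ≤ ∫ x in J, min (w x) a ^ p₁ :=
    hnn _ fun x => rpow_nonneg (le_min (hw0 x) ha.le) _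
  have n2 : 0 ≤ ∫ x in J, min (w x) a ^ p₂ :=
    hnn _ fun x => rpow_nonneg (le_min (hw0 x) ha.le) _
  have n3 : 0 ≤ ∫ x in J, w x ^ p₁ := hnn _ fun x => rpow_nonneg (hw0 x) _
  have n4 : 0 ≤ ∫ x in J, w x ^ p₂ := hnn _ fun x => rpow_nonneg (hw0 x) _
  rw [havg, havg, havg, havg, mul_rpow hk0 n1, mul_rpow hk0 n2, mul_rpow hk0 n3,
    mul_rpow hk0 n4]
  have main := main_integral (volume.restrict J) p₁ p₂ hp₁ hp₂ hp w hw hw0 a ha hint₁ hint₂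
  calc k ^ (1/p₁) * (∫ x in J, min (w x) a ^ p₁) ^ (1/p₁) *
        (k ^ (-(1/p₂)) * (∫ x in J, min (w x) a ^ p₂) ^ (-(1/p₂)))
      = (k ^ (1/p₁) * k ^ (-(1/p₂))) *
        ((∫ x in J, min (w x) a ^ p₁) ^ (1/p₁) * (∫ x in J, min (w x) a ^ p₂) ^ (-(1/p₂))) := by
        ring
    _ ≤ (k ^ (1/p₁) * k ^ (-(1/p₂))) *
        ((∫ x in J, w x ^ p₁) ^ (1/p₁) * (∫ x in J, w x ^ p₂) ^ (-(1/p₂))) := by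
        apply mul_le_mul_of_nonneg_left main
        positivity
    _ = k ^ (1/p₁) * (∫ x in J, w x ^ p₁) ^ (1/p₁) *
        (k ^ (-(1/p₂)) * (∫ x in J, w x ^ p₂) ^ (-(1/p₂))) := by ring
end

section
/- For the A_p characteristic [v]_p := sup_{J ⊆ I} ⟨v⟩_J · ⟨v^{-1/(p-1)}⟩_J^{p-1} with p > 1, truncation from above satisfies [min(w,a)]_p ≤ [w]_p for every a > 0. -/
set_option maxHeartbeats 1000000


open MeasureTheory Real Filter

lemma IsCube.measurableSet {d : ℕ} {J : Set (Fin d → ℝ)} (hJ : IsCube J) :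
    MeasurableSet J := by
  obtain ⟨c0, r, hr, rfl⟩ := hJ
  exact measurableSet_closedBall

lemma IsCube.volume_pos {d : ℕ} {J : Set (Fin d → ℝ)} (hJ : IsCube J) :
    0 < volume J := by
  obtain ⟨c0, r, hr, rfl⟩ := hJ
  exact Metric.measure_closedBall_pos volume c0 hr

lemma IsCube.volume_lt_top {d : ℕ} {J : Set (Fin d → ℝ)} (hJ : IsCube J) :
    volume J < ⊤ := by
  obtain ⟨c0, r, hr, rfl⟩ := hJ
  exact measure_closedBall_lt_top
lemma key_mono {p A B al be : ℝ} (hp : 1 < p) (hA : 0 < A) (hB : 0 < B)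
    (hal : 0 ≤ al) (hbe : 0 ≤ be) (hbal : B * al ≤ A * be) {l : ℝ} (hl : 1 ≤ l) :
    (A + al) * (B + be) ^ (p - 1) ≤ (A * l + al) * (B * l ^ (-(1/(p-1))) + be) ^ (p - 1) := by
  set c : ℝ := 1 / (p - 1) with hc
  have hp1 : (0:ℝ) < p - 1 := by linarith
  have hcpos : 0 < c := by positivity
  have hmono : MonotoneOn (fun l : ℝ => (A * l + al) * (B * l ^ (-c) + be) ^ (p - 1))
      (Set.Ici 1) := by
    apply monotoneOn_of_hasDerivWithinAt_nonneg (f' := fun l =>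
      A * (B * l ^ (-c) + be) ^ (p - 1) +
        (A * l + al) * ((B * (-c * l ^ (-c - 1))) * (p - 1) * (B * l ^ (-c) + be) ^ (p - 1 - 1)))
      (convex_Ici 1)
    · apply ContinuousOn.mul
      · fun_prop
      · apply ContinuousOn.rpow_const
        · apply ContinuousOn.add _ continuousOn_const
          apply ContinuousOn.mul continuousOn_const
          apply ContinuousOn.rpow_const continuousOn_id
          intro x hx
          exact Or.inl (by rintro rfl; exact absurd hx (by norm_num))
        · intro x hx; exact Or.inr (by linarith)
    · intro x hx
      rw [interior_Ici] at hx
      have hx0 : (0:ℝ) < x := lt_trans one_pos hx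
      have hxne : x ≠ 0 := ne_of_gt hx0
      have hginner : HasDerivAt (fun l : ℝ => B * l ^ (-c) + be)
          (B * (-c * x ^ (-c - 1))) x := by
        have := (Real.hasDerivAt_rpow_const (p := -c) (Or.inl hxne)).const_mul B
        simpa using this.add_const be
      have hgpos : 0 < B * x ^ (-c) + be := by positivity
      have h1 : HasDerivAt (fun l : ℝ => A * l + al) A x := by
        simpa using ((hasDerivAt_id x).const_mul A).add_const al
      have h2 : HasDerivAt (fun l : ℝ => (B * l ^ (-c) + be) ^ (p - 1))
          ((B * (-c * x ^ (-c - 1))) * (p - 1) * (B * x ^ (-c) + be) ^ (p - 1 - 1)) x :=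
        hginner.rpow_const (Or.inl (ne_of_gt hgpos))
      exact (h1.mul h2).hasDerivWithinAt
    · intro x hx
      rw [interior_Ici] at hx
      have hx0 : (0:ℝ) < x := lt_trans one_pos hx
      have hgpos : 0 < B * x ^ (-c) + be := by positivity
      have e1 : x ^ (-c - 1) * x = x ^ (-c) := by
        rw [← Real.rpow_add_one (ne_of_gt hx0)]; ring_nf
      have e2 : (B * x ^ (-c) + be) ^ (p - 1) =
          (B * x ^ (-c) + be) ^ (p - 1 - 1) * (B * x ^ (-c) + be) := by
        rw [← Real.rpow_add_one (ne_of_gt hgpos)]; congr 1; ring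
      have e3 : c * (p - 1) = 1 := by rw [hc]; field_simp
      have hxle : x ^ (-c - 1) ≤ 1 :=
        Real.rpow_le_one_of_one_le_of_nonpos (le_of_lt hx) (by linarith)
      have hG : 0 ≤ (B * x ^ (-c) + be) ^ (p - 1 - 1) := Real.rpow_nonneg hgpos.le _
      have hP : 0 ≤ x ^ (-c - 1) := Real.rpow_nonneg hx0.le _
      have e4 : (A * x + al) * ((B * (-c * x ^ (-c - 1))) * (p - 1) *
            (B * x ^ (-c) + be) ^ (p - 1 - 1)) =
          -((A * x + al) * (B * x ^ (-c - 1)) * (B * x ^ (-c) + be) ^ (p - 1 - 1)) := by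
        rw [show (B * (-c * x ^ (-c - 1))) * (p - 1) = -(B * x ^ (-c - 1)) * (c * (p - 1)) by
          ring, e3]; ring
      have h4 : al * (B * x ^ (-c - 1)) ≤ A * be := by
        calc al * (B * x ^ (-c - 1)) ≤ al * (B * 1) := by
              apply mul_le_mul_of_nonneg_left _ hal
              exact mul_le_mul_of_nonneg_left hxle hB.le
          _ = B * al := by ring
          _ ≤ A * be := hbal
      have main : (A * x + al) * (B * x ^ (-c - 1)) ≤ A * (B * x ^ (-c) + be) := by
        have : (A * x + al) * (B * x ^ (-c - 1)) =
            A * B * (x ^ (-c - 1) * x) + al * (B * x ^ (-c - 1)) := by ring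
        rw [this, e1]; nlinarith [h4]
      beta_reduce
      rw [e4, e2]
      nlinarith [mul_le_mul_of_nonneg_right main hG]
  have := hmono (Set.mem_Ici.2 le_rfl) (Set.mem_Ici.2 hl) hl
  simpa using this

lemma holder_piece {α : Type*} [MeasurableSpace α] {μ : Measure α} {w : α → ℝ}
    (hw : Measurable w) (hw0 : ∀ x, 0 ≤ w x) {p : ℝ} (hp : 1 < p) {a : ℝ} (ha : 0 < a)
    {E : Set α} (hE : MeasurableSet E) (hEfin : μ E ≠ ⊤) (hwa : ∀ x ∈ E, a < w x)
    (hIw : IntegrableOn w E μ) (hIσ : IntegrableOn (fun x => w x ^ (-(1/(p-1)))) E μ) :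
    (μ E).toReal ^ p ≤ (∫ x in E, w x ∂μ) * (∫ x in E, w x ^ (-(1/(p-1))) ∂μ) ^ (p - 1) := by
  have hp0 : (0:ℝ) < p := by linarith
  have hp1 : (0:ℝ) < p - 1 := by linarith
  set c : ℝ := 1 / (p - 1) with hc
  set q : ℝ := Real.conjExponent p with hq
  have hqd : q = p / (p - 1) := rfl
  have hpq : p.HolderConjugate q := Real.HolderConjugate.conjExponent hp
  have hq0 : (0:ℝ) < q := hpq.symm.pos
  set f : α → ℝ := fun x => w x ^ (1/p) with hf
  set g : α → ℝ := fun x => (w x ^ (-c)) ^ (1/q) with hg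
  have hone : (ENNReal.ofReal p) / (ENNReal.ofReal p) = 1 :=
    ENNReal.div_self (by simp [hp0, hp0.ne']) ENNReal.ofReal_ne_top
  have honeq : (ENNReal.ofReal q) / (ENNReal.ofReal q) = 1 :=
    ENNReal.div_self (by simp [hq0, hq0.ne']) ENNReal.ofReal_ne_top
  have hfm : Measurable f := by rw [hf]; fun_prop
  have hgm : Measurable g := by rw [hg]; fun_prop
  have hMf : MemLp f (ENNReal.ofReal p) (μ.restrict E) := by
    refine (memLp_norm_rpow_iff (q := ENNReal.ofReal p)
      hfm.aestronglyMeasurable (by simp [hp0, hp0.ne']) ENNReal.ofReal_ne_top).mp ?_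
    rw [hone]
    have : (fun x : α => ‖f x‖ ^ (ENNReal.ofReal p).toReal) = w := by
      funext x
      rw [ENNReal.toReal_ofReal hp0.le, Real.norm_of_nonneg (Real.rpow_nonneg (hw0 x) _),
        ← Real.rpow_mul (hw0 x), one_div, inv_mul_cancel₀ hp0.ne', Real.rpow_one]
    rw [this]
    exact memLp_one_iff_integrable.mpr hIw
  have hMg : MemLp g (ENNReal.ofReal q) (μ.restrict E) := by
    refine (memLp_norm_rpow_iff (q := ENNReal.ofReal q)
      hgm.aestronglyMeasurable (by simp [hq0, hq0.ne'])
      ENNReal.ofReal_ne_top).mp ?_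
    rw [honeq]
    have : (fun x : α => ‖g x‖ ^ (ENNReal.ofReal q).toReal) = fun x => w x ^ (-c) := by
      funext x
      rw [ENNReal.toReal_ofReal hq0.le,
        Real.norm_of_nonneg (Real.rpow_nonneg (Real.rpow_nonneg (hw0 x) _) _),
        ← Real.rpow_mul (Real.rpow_nonneg (hw0 x) _), one_div, inv_mul_cancel₀ hq0.ne',
        Real.rpow_one]
    rw [this]
    exact memLp_one_iff_integrable.mpr hIσ
  have hH := integral_mul_le_Lp_mul_Lq_of_nonneg hpq
    (ae_of_all _ fun x => Real.rpow_nonneg (hw0 x) _)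
    (ae_of_all _ fun x => Real.rpow_nonneg (Real.rpow_nonneg (hw0 x) _) _) hMf hMg
  have eq1 : ∫ x in E, f x * g x ∂μ = (μ E).toReal := by
    rw [setIntegral_congr_fun hE (g := fun _ => (1:ℝ)) ?_, setIntegral_const, smul_eq_mul,
      mul_one, measureReal_def]
    intro x hx
    have hwx : 0 < w x := lt_trans ha (hwa x hx)
    show w x ^ (1/p) * (w x ^ (-c)) ^ (1/q) = 1
    rw [← Real.rpow_mul (hw0 x), ← Real.rpow_add hwx,
      show 1/p + -c * (1/q) = 0 by rw [hc, hqd]; field_simp; ring, Real.rpow_zero]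
  have eq2 : ∫ x in E, f x ^ p ∂μ = ∫ x in E, w x ∂μ := by
    congr 1; funext x
    rw [hf, ← Real.rpow_mul (hw0 x), one_div, inv_mul_cancel₀ hp0.ne', Real.rpow_one]
  have eq3 : ∫ x in E, g x ^ q ∂μ = ∫ x in E, w x ^ (-c) ∂μ := by
    congr 1; funext x
    rw [hg, ← Real.rpow_mul (Real.rpow_nonneg (hw0 x) _), one_div,
      inv_mul_cancel₀ hq0.ne', Real.rpow_one]
  rw [eq1, eq2, eq3] at hH
  have hX0 : 0 ≤ ∫ x in E, w x ∂μ := setIntegral_nonneg hE fun x _ => hw0 x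
  have hY0 : 0 ≤ ∫ x in E, w x ^ (-c) ∂μ :=
    setIntegral_nonneg hE fun x _ => Real.rpow_nonneg (hw0 x) _
  calc (μ E).toReal ^ p
      ≤ ((∫ x in E, w x ∂μ) ^ (1/p) * (∫ x in E, w x ^ (-c) ∂μ) ^ (1/q)) ^ p :=
        Real.rpow_le_rpow ENNReal.toReal_nonneg hH hp0.le
    _ = (∫ x in E, w x ∂μ) * (∫ x in E, w x ^ (-c) ∂μ) ^ (p - 1) := by
        rw [Real.mul_rpow (Real.rpow_nonneg hX0 _) (Real.rpow_nonneg hY0 _),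
          ← Real.rpow_mul hX0, ← Real.rpow_mul hY0, one_div, inv_mul_cancel₀ hp0.ne',
          Real.rpow_one, show 1/q * p = p - 1 by rw [hqd]; field_simp]

lemma percube {d : ℕ} {p a : ℝ} (hp : 1 < p) (ha : 0 < a) {w : (Fin d → ℝ) → ℝ}
    (hw : Measurable w) (hw0 : ∀ x, 0 ≤ w x) {J : Set (Fin d → ℝ)} (hJ : IsCube J)
    (hIw : IntegrableOn w J) (hIσ : IntegrableOn (fun x => w x ^ (-(1/(p-1)))) J) :
    (⨍ x in J, min (w x) a) * (⨍ x in J, (min (w x) a) ^ (-(1/(p-1)))) ^ (p - 1)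
      ≤ (⨍ x in J, w x) * (⨍ x in J, w x ^ (-(1/(p-1)))) ^ (p - 1) := by
  have hp0 : (0:ℝ) < p := by linarith
  have hp1 : (0:ℝ) < p - 1 := by linarith
  set c : ℝ := 1 / (p - 1) with hc
  have hc0 : 0 < c := by positivity
  set b : ℝ := a ^ (-c) with hb
  have hb0 : 0 < b := Real.rpow_pos_of_pos ha _
  have hJm := hJ.measurableSet
  have hJfin := hJ.volume_lt_top
  have hJpos := hJ.volume_pos
  set T : Set (Fin d → ℝ) := {x | a < w x} with hT
  have hTm : MeasurableSet T := measurableSet_lt measurable_const hw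
  set E := J ∩ T with hE
  set F := J \ T with hF
  have hEm : MeasurableSet E := hJm.inter hTm
  have hFm : MeasurableSet F := hJm.diff hTm
  have hEJ : E ⊆ J := Set.inter_subset_left
  have hFJ : F ⊆ J := Set.diff_subset
  have hEfin : volume E ≠ ⊤ := (lt_of_le_of_lt (measure_mono hEJ) hJfin).ne
  set m : ℝ := (volume E).toReal with hm
  have hm0 : 0 ≤ m := ENNReal.toReal_nonneg
  have hwa_meas : Measurable fun x => min (w x) a := hw.min measurable_const
  have hwa0 : ∀ x, 0 ≤ min (w x) a := fun x => le_min (hw0 x) ha.le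
  have hIwa : IntegrableOn (fun x => min (w x) a) J := by
    refine Integrable.mono hIw hwa_meas.aestronglyMeasurable (ae_of_all _ fun x => ?_)
    rw [Real.norm_of_nonneg (hwa0 x), Real.norm_of_nonneg (hw0 x)]
    exact min_le_left _ _
  have hσa_meas : Measurable fun x => (min (w x) a) ^ (-c) := by fun_prop
  have hIσa : IntegrableOn (fun x => (min (w x) a) ^ (-c)) J := by
    have hIg : IntegrableOn (fun x => w x ^ (-c) + b) J :=
      hIσ.add (integrableOn_const hJfin.ne)
    refine Integrable.mono hIg hσa_meas.aestronglyMeasurable (ae_of_all _ fun x => ?_)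
    have h1 : 0 ≤ (min (w x) a) ^ (-c) := Real.rpow_nonneg (hwa0 x) _
    have h2 : 0 ≤ w x ^ (-c) := Real.rpow_nonneg (hw0 x) _
    rw [Real.norm_of_nonneg h1, Real.norm_of_nonneg (by positivity : (0:ℝ) ≤ w x ^ (-c) + b)]
    rcases le_total (w x) a with h | h
    · rw [min_eq_left h]; linarith
    · rw [min_eq_right h, ← hb]; linarith
  have hsplit : ∀ {f : (Fin d → ℝ) → ℝ}, IntegrableOn f J →
      (∫ x in E, f x) + (∫ x in F, f x) = ∫ x in J, f x := fun hf =>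
    integral_inter_add_diff hTm hf
  set X : ℝ := ∫ x in E, w x with hX
  set Y : ℝ := ∫ x in E, w x ^ (-c) with hY
  set al : ℝ := ∫ x in F, w x with hal
  set be : ℝ := ∫ x in F, w x ^ (-c) with hbe
  have hX0 : 0 ≤ X := setIntegral_nonneg hEm fun x _ => hw0 x
  have hY0 : 0 ≤ Y := setIntegral_nonneg hEm fun x _ => Real.rpow_nonneg (hw0 x) _
  have hal0 : 0 ≤ al := setIntegral_nonneg hFm fun x _ => hw0 x
  have hbe0 : 0 ≤ be := setIntegral_nonneg hFm fun x _ => Real.rpow_nonneg (hw0 x) _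
  have eqE_wa : (∫ x in E, min (w x) a) = a * m := by
    rw [setIntegral_congr_fun hEm (g := fun _ => a) fun x hx => min_eq_right (le_of_lt hx.2),
      setIntegral_const, smul_eq_mul, mul_comm, measureReal_def]
  have eqE_sa : (∫ x in E, (min (w x) a) ^ (-c)) = b * m := by
    rw [setIntegral_congr_fun hEm (g := fun _ => b)
        (fun x hx => by rw [min_eq_right (le_of_lt hx.2), hb]),
      setIntegral_const, smul_eq_mul, mul_comm, measureReal_def]
  have eqF_wa : (∫ x in F, min (w x) a) = al :=
    setIntegral_congr_fun hFm fun x hx => min_eq_left (not_lt.1 hx.2)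
  have eqF_sa : (∫ x in F, (min (w x) a) ^ (-c)) = be :=
    setIntegral_congr_fun hFm fun x hx => by rw [min_eq_left (not_lt.1 hx.2)]
  have Iwa_eq : (∫ x in J, min (w x) a) = a * m + al := by
    rw [← hsplit hIwa, eqE_wa, eqF_wa]
  have Isa_eq : (∫ x in J, (min (w x) a) ^ (-c)) = b * m + be := by
    rw [← hsplit hIσa, eqE_sa, eqF_sa]
  have Iw_eq : (∫ x in J, w x) = X + al := (hsplit hIw).symm
  have Is_eq : (∫ x in J, w x ^ (-c)) = Y + be := (hsplit hIσ).symm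
  have hbal : b * al ≤ a * be := by
    have key : (∫ x in F, b * w x) ≤ ∫ x in F, a * (w x ^ (-c)) := by
      refine setIntegral_mono_on ((hIw.mono_set hFJ).const_mul b)
        ((hIσ.mono_set hFJ).const_mul a) hFm fun x hx => ?_
      have hwa' : w x ≤ a := not_lt.1 hx.2
      rcases (hw0 x).eq_or_lt with h0 | h0
      · rw [← h0, Real.zero_rpow (neg_ne_zero.mpr hc0.ne')]
        simp
      · have h1 : w x ^ (c+1) ≤ a ^ (c+1) := Real.rpow_le_rpow (hw0 x) hwa' (by positivity)
        have e1 : w x ^ (c+1) * w x ^ (-c) = w x := by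
          rw [← Real.rpow_add h0, show c + 1 + -c = 1 by ring, Real.rpow_one]
        have e2 : a ^ (-c) * a ^ (c+1) = a := by
          rw [← Real.rpow_add ha, show -c + (c+1) = 1 by ring, Real.rpow_one]
        calc b * w x = a ^ (-c) * (w x ^ (c+1) * w x ^ (-c)) := by rw [e1, hb]
          _ ≤ a ^ (-c) * (a ^ (c+1) * w x ^ (-c)) := by
              have h3 := mul_le_mul_of_nonneg_right h1 (Real.rpow_nonneg (hw0 x) (-c))
              have h4 : (0:ℝ) ≤ a ^ (-c) := Real.rpow_nonneg ha.le _
              nlinarith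
          _ = a * w x ^ (-c) := by rw [← mul_assoc, e2]
    rwa [integral_const_mul, integral_const_mul] at key
  have hH : m ^ p ≤ X * Y ^ (p - 1) := by
    have hIσ' := hIσ.mono_set hEJ
    rw [hc] at hIσ'
    have h := holder_piece hw hw0 hp ha hEm hEfin (fun x hx => hx.2) (hIw.mono_set hEJ) hIσ'
    rw [← hc] at h
    exact h
  have hXam : a * m ≤ X :=
    setIntegral_ge_of_const_le_real hEm hEfin (fun x hx => le_of_lt hx.2) (hIw.mono_set hEJ)
  have main : (a * m + al) * (b * m + be) ^ (p-1) ≤ (X + al) * (Y + be) ^ (p-1) := by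
    rcases hm0.eq_or_lt with hm' | hm'
    · rw [← hm', mul_zero, mul_zero, zero_add, zero_add]
      refine mul_le_mul (by linarith) (Real.rpow_le_rpow hbe0 (by linarith) hp1.le)
        (Real.rpow_nonneg hbe0 _) (by linarith)
    · have hA : 0 < a * m := by positivity
      have hB : 0 < b * m := by positivity
      have hX0' : 0 < X := lt_of_lt_of_le hA hXam
      set l : ℝ := X / (a * m) with hl
      have hl1 : 1 ≤ l := (one_le_div hA).2 hXam
      have hl0 : 0 < l := lt_of_lt_of_le one_pos hl1
      have hbal' : (b * m) * al ≤ (a * m) * be := by nlinarith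
      have step1 := key_mono hp hA hB hal0 hbe0 hbal' hl1
      have hAl : (a * m) * l = X := by rw [hl]; field_simp
      have hY0' : 0 < Y := by
        rcases hY0.eq_or_lt with h | h
        · exfalso
          rw [← h, Real.zero_rpow hp1.ne', mul_zero] at hH
          have := Real.rpow_pos_of_pos hm' p
          linarith
        · exact h
      have hBl : (b * m) * l ^ (-(1/(p-1))) ≤ Y := by
        have hu0 : 0 ≤ (b * m) * l ^ (-(1/(p-1))) := by positivity
        have em : m ^ p = m ^ (p - 1) * m := by
          rw [← Real.rpow_add_one hm'.ne' (p-1)]; congr 1; ring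
        have e : ((b * m) * l ^ (-(1/(p-1)))) ^ (p - 1) = m ^ p / X := by
          rw [Real.mul_rpow hB.le (Real.rpow_nonneg hl0.le _),
            Real.mul_rpow hb0.le hm0,
            ← Real.rpow_mul hl0.le,
            show -(1/(p-1)) * (p-1) = -1 by field_simp,
            Real.rpow_neg_one,
            hb, ← Real.rpow_mul ha.le,
            show -c * (p-1) = -1 by rw [hc]; field_simp,
            Real.rpow_neg_one, hl, em]
          field_simp
        have e2 : m ^ p / X ≤ Y ^ (p-1) := (div_le_iff₀ hX0').2 (by rw [mul_comm]; exact hH)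
        have ec : (p - 1) * c = 1 := by rw [hc]; field_simp
        calc (b * m) * l ^ (-(1/(p-1)))
            = (((b * m) * l ^ (-(1/(p-1)))) ^ (p-1)) ^ c := by
              rw [← Real.rpow_mul hu0, ec, Real.rpow_one]
          _ ≤ (Y ^ (p-1)) ^ c := by
              refine Real.rpow_le_rpow (Real.rpow_nonneg hu0 _) ?_ hc0.le
              rw [e]; exact e2
          _ = Y := by rw [← Real.rpow_mul hY0, ec, Real.rpow_one]
      calc (a * m + al) * (b * m + be) ^ (p-1)
          ≤ ((a * m) * l + al) * ((b * m) * l ^ (-(1/(p-1))) + be) ^ (p-1) := step1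
        _ = (X + al) * ((b * m) * l ^ (-(1/(p-1))) + be) ^ (p-1) := by rw [hAl]
        _ ≤ (X + al) * (Y + be) ^ (p-1) := by
            refine mul_le_mul_of_nonneg_left ?_ (by linarith)
            refine Real.rpow_le_rpow (by positivity) (by linarith) hp1.le
  simp only [setAverage_eq, smul_eq_mul, measureReal_def]
  set V : ℝ := (volume J).toReal with hV
  have hV0 : 0 < V := ENNReal.toReal_pos hJpos.ne' hJfin.ne
  rw [Iwa_eq, Isa_eq, Iw_eq, Is_eq]
  have hVi : (0:ℝ) ≤ V⁻¹ := by positivity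
  rw [Real.mul_rpow hVi (by positivity), Real.mul_rpow hVi (by positivity : (0:ℝ) ≤ Y + be)]
  calc V⁻¹ * (a * m + al) * ((V⁻¹) ^ (p-1) * (b * m + be) ^ (p-1))
      = (V⁻¹ * (V⁻¹) ^ (p-1)) * ((a * m + al) * (b * m + be) ^ (p-1)) := by ring
    _ ≤ (V⁻¹ * (V⁻¹) ^ (p-1)) * ((X + al) * (Y + be) ^ (p-1)) := by
        refine mul_le_mul_of_nonneg_left main (by positivity)
    _ = V⁻¹ * (X + al) * ((V⁻¹) ^ (p-1) * (Y + be) ^ (p-1)) := by ring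

/-- The classical Muckenhoupt `A_p` characteristic over the cube `I`. -/
noncomputable def muckenhouptChar {d : ℕ} (I : Set (Fin d → ℝ)) (p : ℝ)
    (w : (Fin d → ℝ) → ℝ) : ℝ :=
  sSup {r | ∃ J : Set (Fin d → ℝ), IsCube J ∧ J ⊆ I ∧
    r = (⨍ x in J, w x) * (⨍ x in J, w x ^ (-(1 / (p - 1)))) ^ (p - 1)}

theorem cutoff_above_muckenhoupt {d : ℕ} (I : Set (Fin d → ℝ)) (hI : IsCube I)
    (p : ℝ) (hp : 1 < p)
    (w : (Fin d → ℝ) → ℝ) (hw : Measurable w) (hw0 : ∀ x, 0 ≤ w x)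
    (hint₁ : ∀ J : Set (Fin d → ℝ), IsCube J → J ⊆ I → IntegrableOn w J)
    (hint₂ : ∀ J : Set (Fin d → ℝ), IsCube J → J ⊆ I →
      IntegrableOn (fun x => w x ^ (-(1 / (p - 1)))) J)
    (hfin : BddAbove {r | ∃ J : Set (Fin d → ℝ), IsCube J ∧ J ⊆ I ∧
      r = (⨍ x in J, w x) * (⨍ x in J, w x ^ (-(1 / (p - 1)))) ^ (p - 1)})
    (a : ℝ) (ha : 0 < a) :
    muckenhouptChar I p (fun x => min (w x) a) ≤ muckenhouptChar I p w := by
  have h0 : 0 ≤ muckenhouptChar I p w := by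
    have hmem : ((⨍ x in I, w x) * (⨍ x in I, w x ^ (-(1/(p-1)))) ^ (p-1)) ∈
        {r | ∃ J : Set (Fin d → ℝ), IsCube J ∧ J ⊆ I ∧
          r = (⨍ x in J, w x) * (⨍ x in J, w x ^ (-(1 / (p - 1)))) ^ (p - 1)} :=
      ⟨I, hI, subset_rfl, rfl⟩
    have havg : 0 ≤ ⨍ x in I, w x ^ (-(1/(p-1))) := by
      rw [setAverage_eq, smul_eq_mul]
      exact mul_nonneg (by positivity)
        (setIntegral_nonneg hI.measurableSet fun x _ => Real.rpow_nonneg (hw0 x) _)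
    have h1 : 0 ≤ (⨍ x in I, w x) * (⨍ x in I, w x ^ (-(1/(p-1)))) ^ (p-1) := by
      refine mul_nonneg ?_ (Real.rpow_nonneg havg _)
      rw [setAverage_eq, smul_eq_mul]
      exact mul_nonneg (by positivity) (setIntegral_nonneg hI.measurableSet fun x _ => hw0 x)
    exact le_trans h1 (le_csSup hfin hmem)
  refine Real.sSup_le ?_ h0
  rintro r ⟨J, hJc, hJI, rfl⟩
  have step := percube hp ha hw hw0 hJc (hint₁ J hJc hJI) (hint₂ J hJc hJI)
  refine le_trans ?_ (le_csSup hfin ⟨J, hJc, hJI, rfl⟩)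
  simpa using step
end

section
/- Key algebraic inequality in the A₂ proof: if x₁, y₁ are averages of w and w⁻¹ over {w ≤ a} (so x₁ ≤ a, y₁ ≥ 1/a) and x₂, y₂ are averages of w and w⁻¹ over {w > a}, then x₁ y₂ + x₂ y₁ − y₁ a − x₁ a⁻¹ ≥ 0. -/
open MeasureTheory Real Filter

theorem key_A2_inequality {d : ℕ} (J : Set (Fin d → ℝ)) (hJ : IsCube J)
    (w : (Fin d → ℝ) → ℝ) (hw : Measurable w) (hw0 : ∀ x, 0 ≤ w x)
    (a : ℝ) (ha : 0 < a)
    (h₁ : 0 < volume {x ∈ J | w x ≤ a}) (h₂ : 0 < volume {x ∈ J | a < w x})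
    (hint : IntegrableOn w J) (hint' : IntegrableOn (fun x => (w x)⁻¹) J)
    (x₁ y₁ x₂ y₂ : ℝ)
    (hx₁ : x₁ = ⨍ x in {x ∈ J | w x ≤ a}, w x)
    (hy₁ : y₁ = ⨍ x in {x ∈ J | w x ≤ a}, (w x)⁻¹)
    (hx₂ : x₂ = ⨍ x in {x ∈ J | a < w x}, w x)
    (hy₂ : y₂ = ⨍ x in {x ∈ J | a < w x}, (w x)⁻¹) :
    0 ≤ x₁ * y₂ + x₂ * y₁ - y₁ * a - x₁ * a⁻¹ := by
  obtain ⟨c, r, hr, hJball⟩ := hJ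
  set S₁ := {x ∈ J | w x ≤ a} with hS₁def
  set S₂ := {x ∈ J | a < w x} with hS₂def
  have hJm : MeasurableSet J := by rw [hJball]; exact measurableSet_closedBall
  have hS₁m : MeasurableSet S₁ := hJm.inter (measurableSet_le hw measurable_const)
  have hS₂m : MeasurableSet S₂ := hJm.inter (measurableSet_lt measurable_const hw)
  have hJfin : volume J < ⊤ := by rw [hJball]; exact measure_closedBall_lt_top
  have hsub₁ : S₁ ⊆ J := Set.sep_subset _ _
  have hsub₂ : S₂ ⊆ J := Set.sep_subset _ _
  have hfin₁ : volume S₁ < ⊤ := lt_of_le_of_lt (measure_mono hsub₁) hJfin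
  have hfin₂ : volume S₂ < ⊤ := lt_of_le_of_lt (measure_mono hsub₂) hJfin
  set μ₁ := (volume S₁).toReal with hμ₁def
  set μ₂ := (volume S₂).toReal with hμ₂def
  have hμ₁pos : 0 < μ₁ := ENNReal.toReal_pos h₁.ne' hfin₁.ne
  have hμ₂pos : 0 < μ₂ := ENNReal.toReal_pos h₂.ne' hfin₂.ne
  have hw₁ : IntegrableOn w S₁ := hint.mono_set hsub₁
  have hw₂ : IntegrableOn w S₂ := hint.mono_set hsub₂
  have hi₁ : IntegrableOn (fun x => (w x)⁻¹) S₁ := hint'.mono_set hsub₁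
  have hi₂ : IntegrableOn (fun x => (w x)⁻¹) S₂ := hint'.mono_set hsub₂
  set I₁w := ∫ x in S₁, w x with hI₁w
  set I₁i := ∫ x in S₁, (w x)⁻¹ with hI₁i
  set I₂w := ∫ x in S₂, w x with hI₂w
  set I₂i := ∫ x in S₂, (w x)⁻¹ with hI₂i
  rw [setAverage_eq, smul_eq_mul] at hx₁ hy₁ hx₂ hy₂
  -- x₁ ≥ 0
  have hI₁w_nonneg : 0 ≤ I₁w := setIntegral_nonneg hS₁m fun x _ => hw0 x
  have hx₁nn : 0 ≤ x₁ := by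
    rw [hx₁]; exact mul_nonneg (inv_nonneg.2 ENNReal.toReal_nonneg) hI₁w_nonneg
  -- x₁ ≤ a^2 * y₁
  have hptS₁ : ∀ x ∈ S₁, w x ≤ a ^ 2 * (w x)⁻¹ := by
    intro x hx
    rcases (hw0 x).eq_or_lt with h0 | hpos
    · rw [← h0]; simp
    · have hwa : w x ≤ a := hx.2
      rw [show a ^ 2 * (w x)⁻¹ = a ^ 2 / w x from (div_eq_mul_inv _ _).symm,
        le_div_iff₀ hpos]
      nlinarith
  have hIle : I₁w ≤ a ^ 2 * I₁i := by
    have h := setIntegral_mono_on hw₁ (hi₁.const_mul (a ^ 2)) hS₁m hptS₁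
    rwa [integral_const_mul] at h
  have hx₁le : x₁ ≤ a ^ 2 * y₁ := by
    rw [hx₁, hy₁]
    calc ((volume S₁).toReal)⁻¹ * I₁w ≤ ((volume S₁).toReal)⁻¹ * (a ^ 2 * I₁i) :=
          mul_le_mul_of_nonneg_left hIle (inv_nonneg.2 ENNReal.toReal_nonneg)
      _ = a ^ 2 * (((volume S₁).toReal)⁻¹ * I₁i) := by ring
  have hy₁nn : 0 ≤ y₁ := by nlinarith [mul_pos ha ha]
  -- pointwise inequality on S₂
  have hptS₂ : ∀ x ∈ S₂, 0 ≤ x₁ * (w x)⁻¹ + y₁ * w x - (y₁ * a + x₁ * a⁻¹) := by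
    intro x hx
    have hta : a < w x := hx.2
    have ht : 0 < w x := ha.trans hta
    have key : 0 ≤ (w x - a) * (y₁ * a * w x - x₁) := by
      apply mul_nonneg (by linarith)
      nlinarith
    have expand : x₁ * (w x)⁻¹ + y₁ * w x - (y₁ * a + x₁ * a⁻¹)
        = (w x - a) * (y₁ * a * w x - x₁) * (w x * a)⁻¹ := by
      field_simp
      ring
    rw [expand]
    exact mul_nonneg key (inv_nonneg.2 (by positivity))
  have hkey : 0 ≤ ∫ x in S₂, (x₁ * (w x)⁻¹ + y₁ * w x - (y₁ * a + x₁ * a⁻¹)) :=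
    setIntegral_nonneg hS₂m hptS₂
  have heval : ∫ x in S₂, (x₁ * (w x)⁻¹ + y₁ * w x - (y₁ * a + x₁ * a⁻¹))
      = x₁ * I₂i + y₁ * I₂w - (y₁ * a + x₁ * a⁻¹) * μ₂ := by
    have hadd : IntegrableOn (fun x => x₁ * (w x)⁻¹ + y₁ * w x) S₂ :=
      (hi₂.const_mul x₁).add (hw₂.const_mul y₁)
    have hA : IntegrableOn (fun x => x₁ * (w x)⁻¹) S₂ := hi₂.const_mul x₁
    have hB : IntegrableOn (fun x => y₁ * w x) S₂ := hw₂.const_mul y₁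
    rw [integral_sub hadd (integrableOn_const hfin₂.ne),
      integral_add hA hB, integral_const_mul, integral_const_mul,
      setIntegral_const, smul_eq_mul, measureReal_def]
    ring
  rw [heval] at hkey
  have hc : μ₂ * μ₂⁻¹ = 1 := mul_inv_cancel₀ hμ₂pos.ne'
  have hrw : x₁ * y₂ + x₂ * y₁ - y₁ * a - x₁ * a⁻¹
      = μ₂⁻¹ * (x₁ * I₂i + y₁ * I₂w - (y₁ * a + x₁ * a⁻¹) * μ₂) := by
    rw [hx₂, hy₂, measureReal_def, ← hμ₂def, ← hI₂i, ← hI₂w]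
    field_simp
    ring
  rw [hrw]
  exact mul_nonneg (inv_nonneg.2 hμ₂pos.le) hkey
end

section
/- Monotonicity in u: suppose p₁ > p₂ are nonzero reals, α₁, α₂ > 0, and x₁ = ⟨w^{p₁}⟩_{J₁}, y₁ = ⟨w^{p₂}⟩_{J₁} where w ≤ a on J₁. Then for u ≥ a the function ψ(u) = (α₁x₁ + α₂u^{p₁})^{1/p₁}(α₁y₁ + α₂u^{p₂})^{-1/p₂} is nondecreasing on [a, ∞). -/
open MeasureTheory Real Filter

theorem monotone_in_u {d : ℕ} (p₁ p₂ : ℝ) (hp₁ : p₁ ≠ 0) (hp₂ : p₂ ≠ 0) (hp : p₂ < p₁)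
    (α₁ α₂ : ℝ) (hα₁ : 0 < α₁) (hα₂ : 0 < α₂)
    (J₁ : Set (Fin d → ℝ)) (hJ₁ : MeasurableSet J₁)
    (hJ₁pos : 0 < volume J₁) (hJ₁fin : volume J₁ < ⊤)
    (w : (Fin d → ℝ) → ℝ) (hw : Measurable w) (hw0 : ∀ x, 0 ≤ w x)
    (a : ℝ) (ha : 0 < a) (hwa : ∀ x ∈ J₁, w x ≤ a)
    (hint₁ : IntegrableOn (fun x => w x ^ p₁) J₁)
    (hint₂ : IntegrableOn (fun x => w x ^ p₂) J₁)
    (x₁ y₁ : ℝ) (hx₁ : x₁ = ⨍ x in J₁, w x ^ p₁) (hy₁ : y₁ = ⨍ x in J₁, w x ^ p₂) :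
    MonotoneOn (fun u : ℝ =>
        (α₁ * x₁ + α₂ * u ^ p₁) ^ (1 / p₁) * (α₁ * y₁ + α₂ * u ^ p₂) ^ (-(1 / p₂)))
      (Set.Ici a) := by
  have hpp : (0:ℝ) ≤ p₁ - p₂ := le_of_lt (sub_pos.mpr hp)
  -- pointwise inequality
  have pointwise : ∀ t u : ℝ, 0 ≤ t → t ≤ u → 0 < u →
      u ^ p₂ * t ^ p₁ ≤ u ^ p₁ * t ^ p₂ := by
    intro t u ht htu hu
    rcases eq_or_lt_of_le ht with h0 | h0
    · rw [← h0, Real.zero_rpow hp₁, Real.zero_rpow hp₂, mul_zero, mul_zero]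
    · have h1 : p₁ = p₂ + (p₁ - p₂) := by ring
      rw [h1, Real.rpow_add h0, Real.rpow_add hu]
      calc u ^ p₂ * (t ^ p₂ * t ^ (p₁ - p₂))
          ≤ u ^ p₂ * (t ^ p₂ * u ^ (p₁ - p₂)) := by
            exact mul_le_mul_of_nonneg_left
              (mul_le_mul_of_nonneg_left (Real.rpow_le_rpow ht htu hpp)
                (Real.rpow_nonneg ht _)) (Real.rpow_pos_of_pos hu _).le
        _ = u ^ p₂ * u ^ (p₁ - p₂) * t ^ p₂ := by ring
  have hvol : (0:ℝ) < (volume J₁).toReal := ENNReal.toReal_pos hJ₁pos.ne' hJ₁fin.ne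
  have hx₁0 : 0 ≤ x₁ := by
    rw [hx₁, setAverage_eq, smul_eq_mul]
    exact mul_nonneg (by positivity)
      (setIntegral_nonneg hJ₁ fun x _ => Real.rpow_nonneg (hw0 x) _)
  have hy₁0 : 0 ≤ y₁ := by
    rw [hy₁, setAverage_eq, smul_eq_mul]
    exact mul_nonneg (by positivity)
      (setIntegral_nonneg hJ₁ fun x _ => Real.rpow_nonneg (hw0 x) _)
  -- key averaged inequality
  have hkey : ∀ u : ℝ, a ≤ u → u ^ p₂ * x₁ ≤ u ^ p₁ * y₁ := by
    intro u hu
    have hu0 : 0 < u := ha.trans_le hu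
    have hI : ∫ x in J₁, u ^ p₂ * w x ^ p₁ ≤ ∫ x in J₁, u ^ p₁ * w x ^ p₂ :=
      setIntegral_mono_on (hint₁.const_mul _) (hint₂.const_mul _) hJ₁
        (fun x hx => pointwise (w x) u (hw0 x) ((hwa x hx).trans hu) hu0)
    rw [integral_const_mul, integral_const_mul] at hI
    have hc : (0:ℝ) ≤ ((volume J₁).toReal)⁻¹ := by positivity
    rw [hx₁, hy₁, setAverage_eq, setAverage_eq, smul_eq_mul, smul_eq_mul]
    calc u ^ p₂ * (((volume J₁).toReal)⁻¹ * ∫ x in J₁, w x ^ p₁)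
        = ((volume J₁).toReal)⁻¹ * (u ^ p₂ * ∫ x in J₁, w x ^ p₁) := by ring
      _ ≤ ((volume J₁).toReal)⁻¹ * (u ^ p₁ * ∫ x in J₁, w x ^ p₂) :=
          mul_le_mul_of_nonneg_left hI hc
      _ = u ^ p₁ * (((volume J₁).toReal)⁻¹ * ∫ x in J₁, w x ^ p₂) := by ring
  -- positivity of the two base expressions
  have hA : ∀ u : ℝ, a ≤ u → 0 < α₁ * x₁ + α₂ * u ^ p₁ := fun u hu =>
    add_pos_of_nonneg_of_pos (mul_nonneg hα₁.le hx₁0)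
      (mul_pos hα₂ (Real.rpow_pos_of_pos (ha.trans_le hu) _))
  have hB : ∀ u : ℝ, a ≤ u → 0 < α₁ * y₁ + α₂ * u ^ p₂ := fun u hu =>
    add_pos_of_nonneg_of_pos (mul_nonneg hα₁.le hy₁0)
      (mul_pos hα₂ (Real.rpow_pos_of_pos (ha.trans_le hu) _))
  -- derivative
  have hderiv : ∀ u : ℝ, a ≤ u → HasDerivAt (fun u : ℝ =>
      (α₁ * x₁ + α₂ * u ^ p₁) ^ (1 / p₁) * (α₁ * y₁ + α₂ * u ^ p₂) ^ (-(1 / p₂)))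
      ((1 / p₁ * (α₁ * x₁ + α₂ * u ^ p₁) ^ (1 / p₁ - 1) * (α₂ * (p₁ * u ^ (p₁ - 1)))) *
          (α₁ * y₁ + α₂ * u ^ p₂) ^ (-(1 / p₂)) +
        (α₁ * x₁ + α₂ * u ^ p₁) ^ (1 / p₁) *
          (-(1 / p₂) * (α₁ * y₁ + α₂ * u ^ p₂) ^ (-(1 / p₂) - 1) * (α₂ * (p₂ * u ^ (p₂ - 1))))) u := by
    intro u hu
    have hu0 : 0 < u := ha.trans_le hu
    have h1 : HasDerivAt (fun u : ℝ => α₁ * x₁ + α₂ * u ^ p₁) (α₂ * (p₁ * u ^ (p₁ - 1))) u :=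
      ((Real.hasDerivAt_rpow_const (Or.inl hu0.ne')).const_mul α₂).const_add _
    have h2 : HasDerivAt (fun u : ℝ => α₁ * y₁ + α₂ * u ^ p₂) (α₂ * (p₂ * u ^ (p₂ - 1))) u :=
      ((Real.hasDerivAt_rpow_const (Or.inl hu0.ne')).const_mul α₂).const_add _
    have h3 := h1.rpow_const (p := 1 / p₁) (Or.inl (hA u hu).ne')
    have h4 := h2.rpow_const (p := -(1 / p₂)) (Or.inl (hB u hu).ne')
    have h5 : HasDerivAt (fun y => (α₁ * x₁ + α₂ * y ^ p₁) ^ (1 / p₁) *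
        (α₁ * y₁ + α₂ * y ^ p₂) ^ (-(1 / p₂))) _ u := h3.mul h4
    convert h5 using 1
    ring
  -- nonnegativity of the derivative
  have hD0 : ∀ u : ℝ, a ≤ u →
      0 ≤ (1 / p₁ * (α₁ * x₁ + α₂ * u ^ p₁) ^ (1 / p₁ - 1) * (α₂ * (p₁ * u ^ (p₁ - 1)))) *
          (α₁ * y₁ + α₂ * u ^ p₂) ^ (-(1 / p₂)) +
        (α₁ * x₁ + α₂ * u ^ p₁) ^ (1 / p₁) *
          (-(1 / p₂) * (α₁ * y₁ + α₂ * u ^ p₂) ^ (-(1 / p₂) - 1) * (α₂ * (p₂ * u ^ (p₂ - 1)))) := by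
    intro u hu
    have hu0 : 0 < u := ha.trans_le hu
    have hAu := hA u hu
    have hBu := hB u hu
    have hP : 0 < (α₁ * x₁ + α₂ * u ^ p₁) ^ (1 / p₁) := Real.rpow_pos_of_pos hAu _
    have hQ : 0 < (α₁ * y₁ + α₂ * u ^ p₂) ^ (-(1 / p₂)) := Real.rpow_pos_of_pos hBu _
    have e1 : (α₁ * x₁ + α₂ * u ^ p₁) ^ (1 / p₁ - 1)
        = (α₁ * x₁ + α₂ * u ^ p₁) ^ (1 / p₁) / (α₁ * x₁ + α₂ * u ^ p₁) := by
      rw [Real.rpow_sub hAu, Real.rpow_one]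
    have e2 : (α₁ * y₁ + α₂ * u ^ p₂) ^ (-(1 / p₂) - 1)
        = (α₁ * y₁ + α₂ * u ^ p₂) ^ (-(1 / p₂)) / (α₁ * y₁ + α₂ * u ^ p₂) := by
      rw [Real.rpow_sub hBu, Real.rpow_one]
    have e3 : u ^ (p₁ - 1) = u ^ p₁ / u := by rw [Real.rpow_sub hu0, Real.rpow_one]
    have e4 : u ^ (p₂ - 1) = u ^ p₂ / u := by rw [Real.rpow_sub hu0, Real.rpow_one]
    rw [e1, e2, e3, e4]
    have hfact :
        (1 / p₁ * ((α₁ * x₁ + α₂ * u ^ p₁) ^ (1 / p₁) / (α₁ * x₁ + α₂ * u ^ p₁)) *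
            (α₂ * (p₁ * (u ^ p₁ / u)))) * (α₁ * y₁ + α₂ * u ^ p₂) ^ (-(1 / p₂)) +
          (α₁ * x₁ + α₂ * u ^ p₁) ^ (1 / p₁) *
            (-(1 / p₂) * ((α₁ * y₁ + α₂ * u ^ p₂) ^ (-(1 / p₂)) / (α₁ * y₁ + α₂ * u ^ p₂)) *
              (α₂ * (p₂ * (u ^ p₂ / u))))
        = α₂ * α₁ * (α₁ * x₁ + α₂ * u ^ p₁) ^ (1 / p₁) *
            (α₁ * y₁ + α₂ * u ^ p₂) ^ (-(1 / p₂)) *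
            (u⁻¹ * (α₁ * x₁ + α₂ * u ^ p₁)⁻¹ * (α₁ * y₁ + α₂ * u ^ p₂)⁻¹) *
            (u ^ p₁ * y₁ - u ^ p₂ * x₁) := by
      field_simp
      ring
    rw [hfact]
    have hC : 0 ≤ α₂ * α₁ * (α₁ * x₁ + α₂ * u ^ p₁) ^ (1 / p₁) *
        (α₁ * y₁ + α₂ * u ^ p₂) ^ (-(1 / p₂)) *
        (u⁻¹ * (α₁ * x₁ + α₂ * u ^ p₁)⁻¹ * (α₁ * y₁ + α₂ * u ^ p₂)⁻¹) := by positivity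
    exact mul_nonneg hC (sub_nonneg.mpr (hkey u hu))
  -- conclude
  apply monotoneOn_of_deriv_nonneg (convex_Ici a)
  · intro u hu
    exact (hderiv u hu).continuousAt.continuousWithinAt
  · intro u hu
    rw [interior_Ici] at hu
    exact (hderiv u hu.le).differentiableAt.differentiableWithinAt
  · intro u hu
    rw [interior_Ici] at hu
    rw [(hderiv u hu.le).deriv]
    exact hD0 u hu.le
end
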